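/- For the partially consistent orthant nonlinear expectation $\mathfrak{E}_S(X) = \operatorname{esssup}_{\mathbb{Q}\in\mathcal{Q}}\mathbb{E}^{\mathbb{Q}}(X\mid\mathcal{F}(S))$ with $\mathcal{Q}$ a family of product measures, sub-consistency holds: for orthant stopping times $S \le S'$, $\mathfrak{E}_S(X) \le \mathfrak{E}_S(\mathfrak{E}_{S'}(X))$ almost surely for every bounded measurable $X$. In particular, if $\mathfrak{E}_{S'}(X) \le 0$ a.s., then for any $A \in \mathcal{F}(S')$, $\mathfrak{E}_S(\mathbb{I}_A X) \le 0$ a.s. -/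

import Mathlib

open MeasureTheory

section Aux
open MeasureTheory Filter Set

section PiAC

universe u v

lemma pi_absolutelyContinuous_aux : ∀ (ι : Type u) [Fintype ι]
    (Ω : ι → Type v) (mΩ : ∀ i, MeasurableSpace (Ω i)) (μ ν : ∀ i, Measure (Ω i)),
    (∀ i, IsProbabilityMeasure (μ i)) → (∀ i, IsProbabilityMeasure (ν i)) →
    (∀ i, μ i ≪ ν i) → Measure.pi μ ≪ Measure.pi ν := by
  intro ι hι
  refine Fintype.induction_empty_option
    (P := fun κ inst => ∀ (Ω : κ → Type v) (mΩ : ∀ i, MeasurableSpace (Ω i))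
      (μ ν : ∀ i, Measure (Ω i)),
      (∀ i, IsProbabilityMeasure (μ i)) → (∀ i, IsProbabilityMeasure (ν i)) →
      (∀ i, μ i ≪ ν i) →
      @Measure.pi κ Ω inst mΩ μ ≪ @Measure.pi κ Ω inst mΩ ν) ?_ ?_ ?_ ι
  · -- of_equiv
    intro α β _ e H Ω mΩ μ ν hμ hν hac
    haveI iα : Fintype α := Fintype.ofEquiv β e.symm
    haveI : ∀ i, IsProbabilityMeasure (μ i) := hμ
    haveI : ∀ i, IsProbabilityMeasure (ν i) := hν
    have hμe : ∀ i : α, IsProbabilityMeasure (μ (e i)) := fun i => hμ (e i)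
    have hνe : ∀ i : α, IsProbabilityMeasure (ν (e i)) := fun i => hν (e i)
    have H' := H (fun i => Ω (e i)) (fun i => mΩ (e i)) (fun i => μ (e i)) (fun i => ν (e i))
      hμe hνe (fun i => hac (e i))
    rw [Subsingleton.elim (Fintype.ofEquiv β e.symm) iα] at H'
    have h1 := Measure.pi_map_piCongrLeft e μ
    have h2 := Measure.pi_map_piCongrLeft e ν
    rw [← h1, ← h2]
    exact H'.map (MeasurableEquiv.piCongrLeft (fun i ↦ Ω i) e).measurable
  · -- empty
    intro Ω mΩ μ ν hμ hν hac
    rw [Measure.pi_of_empty μ, Measure.pi_of_empty ν]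
  · -- option
    intro α _ H Ω mΩ μ ν hμ hν hac
    haveI : ∀ i, IsProbabilityMeasure (μ i) := hμ
    haveI : ∀ i, IsProbabilityMeasure (ν i) := hν
    have H' := H (fun i => Ω (some i)) (fun i => mΩ (some i)) (fun i => μ (some i))
      (fun i => ν (some i)) (fun i => hμ (some i)) (fun i => hν (some i))
      (fun i => hac (some i))
    rw [← Measure.pi_map_piOptionEquivProd μ, ← Measure.pi_map_piOptionEquivProd ν]
    exact (H'.prod (hac none)).map (MeasurableEquiv.piOptionEquivProd Ω).symm.measurable

end PiAC

section EssSup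

variable {α : Type*} [MeasurableSpace α]

lemma exists_ae_essSup (μ : Measure α) [IsFiniteMeasure μ]
    (G : Set (α → ℝ)) (hne : G.Nonempty) (K : ℝ)
    (hG : ∀ f ∈ G, Measurable f ∧ ∀ ω, |f ω| ≤ K) :
    ∃ g : α → ℝ, Measurable g ∧ (∀ ω, |g ω| ≤ K) ∧ (∀ f ∈ G, f ≤ᵐ[μ] g) ∧
      ∀ Z : α → ℝ, (∀ f ∈ G, f ≤ᵐ[μ] Z) → g ≤ᵐ[μ] Z := by
  classical
  -- the "closure" of G under the relevant properties
  set D : Set (α → ℝ) := {f | Measurable f ∧ (∀ ω, |f ω| ≤ K) ∧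
    ∀ Z : α → ℝ, (∀ f' ∈ G, f' ≤ᵐ[μ] Z) → f ≤ᵐ[μ] Z} with hD
  have hGD : G ⊆ D := by
    intro f hf
    exact ⟨(hG f hf).1, (hG f hf).2, fun Z hZ => hZ f hf⟩
  have hDint : ∀ f ∈ D, Integrable f μ := by
    intro f hf
    refine (integrable_const K).mono' hf.1.aestronglyMeasurable ?_
    exact Eventually.of_forall fun ω => by simpa [Real.norm_eq_abs] using hf.2.1 ω
  have hDmax : ∀ f₁ ∈ D, ∀ f₂ ∈ D, (fun ω => max (f₁ ω) (f₂ ω)) ∈ D := by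
    intro f₁ h₁ f₂ h₂
    refine ⟨h₁.1.max h₂.1, fun ω => abs_max_le_max_abs_abs.trans (max_le (h₁.2.1 ω) (h₂.2.1 ω)),
      fun Z hZ => ?_⟩
    filter_upwards [h₁.2.2 Z hZ, h₂.2.2 Z hZ] with ω hω₁ hω₂
    exact max_le hω₁ hω₂
  have hDne : D.Nonempty := ⟨hne.choose, hGD hne.choose_spec⟩
  -- the set of integrals
  set T : Set ℝ := (fun f => ∫ ω, f ω ∂μ) '' D with hT
  have hTne : T.Nonempty := ⟨_, hDne.choose, hDne.choose_spec, rfl⟩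
  have hTbdd : BddAbove T := by
    refine ⟨K * (μ Set.univ).toReal, ?_⟩
    rintro y ⟨f, hf, rfl⟩
    calc ∫ ω, f ω ∂μ ≤ ∫ _, K ∂μ :=
          integral_mono (hDint f hf) (integrable_const K)
            (fun ω => (abs_le.1 (hf.2.1 ω)).2)
      _ = (μ Set.univ).toReal * K := by simp [mul_comm, measureReal_def]
      _ = K * (μ Set.univ).toReal := mul_comm _ _
  set c : ℝ := sSup T with hc
  -- choose an approximating sequence
  have hseq : ∀ n : ℕ, ∃ f ∈ D, c - 1 / (n + 1) < ∫ ω, f ω ∂μ := by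
    intro n
    have hlt : c - 1 / (n + 1) < c := by
      have : (0:ℝ) < 1 / (n + 1) := by positivity
      linarith
    obtain ⟨y, ⟨f, hf, rfl⟩, hy⟩ := exists_lt_of_lt_csSup hTne hlt
    exact ⟨f, hf, hy⟩
  choose f hfD hfint using hseq
  -- running maxima
  let h : ℕ → α → ℝ := fun n => Nat.rec (f 0) (fun k ih => fun ω => max (ih ω) (f (k + 1) ω)) n
  have hh0 : h 0 = f 0 := rfl
  have hhsucc : ∀ n, h (n + 1) = fun ω => max (h n ω) (f (n + 1) ω) := fun n => rfl
  have hhD : ∀ n, h n ∈ D := by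
    intro n
    induction n with
    | zero => exact hfD 0
    | succ k ih => exact hDmax _ ih _ (hfD (k + 1))
  have hhmono : ∀ ω, Monotone fun n => h n ω := by
    intro ω
    exact monotone_nat_of_le_succ fun n => by rw [hhsucc]; exact le_max_left _ _
  have hfh : ∀ n ω, f n ω ≤ h n ω := by
    intro n ω
    cases n with
    | zero => exact le_rfl
    | succ k => rw [hhsucc]; exact le_max_right _ _
  have hbddA : ∀ ω, BddAbove (Set.range fun n => h n ω) := by
    intro ω
    exact ⟨K, by rintro y ⟨n, rfl⟩; exact (abs_le.1 ((hhD n).2.1 ω)).2⟩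
  set g : α → ℝ := fun ω => ⨆ n, h n ω with hg
  have hgtend : ∀ ω, Tendsto (fun n => h n ω) atTop (nhds (g ω)) := fun ω =>
    tendsto_atTop_ciSup (hhmono ω) (hbddA ω)
  have hgmeas : Measurable g := Measurable.iSup fun n => (hhD n).1
  have hgbdd : ∀ ω, |g ω| ≤ K := by
    intro ω
    rw [abs_le]
    constructor
    · exact le_trans (abs_le.1 ((hhD 0).2.1 ω)).1 (le_ciSup (hbddA ω) 0)
    · exact ciSup_le fun n => (abs_le.1 ((hhD n).2.1 ω)).2
  -- the integral of g is c
  have hint_le : ∀ n, ∫ ω, h n ω ∂μ ≤ c := fun n => le_csSup hTbdd ⟨h n, hhD n, rfl⟩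
  have hint_lt : ∀ n, c - 1 / (n + 1) < ∫ ω, h n ω ∂μ := fun n =>
    lt_of_lt_of_le (hfint n) (integral_mono (hDint _ (hfD n)) (hDint _ (hhD n)) (hfh n))
  have hinttend : Tendsto (fun n => ∫ ω, h n ω ∂μ) atTop (nhds (∫ ω, g ω ∂μ)) := by
    refine tendsto_integral_of_dominated_convergence (fun _ => K)
      (fun n => (hhD n).1.aestronglyMeasurable) (integrable_const K)
      (fun n => Eventually.of_forall fun ω => by
        simpa [Real.norm_eq_abs] using (hhD n).2.1 ω)
      (Eventually.of_forall fun ω => hgtend ω)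
  have hinttendc : Tendsto (fun n => ∫ ω, h n ω ∂μ) atTop (nhds c) := by
    have h1 : Tendsto (fun n : ℕ => c - 1 / (n + 1 : ℝ)) atTop (nhds c) := by
      have := tendsto_one_div_add_atTop_nhds_zero_nat (𝕜 := ℝ)
      simpa using tendsto_const_nhds.sub this
    exact tendsto_of_tendsto_of_tendsto_of_le_of_le h1 tendsto_const_nhds
      (fun n => (hint_lt n).le) hint_le
  have hgint : ∫ ω, g ω ∂μ = c := tendsto_nhds_unique hinttend hinttendc
  have hgD : g ∈ D := by
    refine ⟨hgmeas, hgbdd, fun Z hZ => ?_⟩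
    have hhZ : ∀ n, h n ≤ᵐ[μ] Z := fun n => (hhD n).2.2 Z hZ
    have : ∀ᵐ ω ∂μ, ∀ n, h n ω ≤ Z ω := ae_all_iff.2 hhZ
    filter_upwards [this] with ω hω
    exact ciSup_le hω
  refine ⟨g, hgmeas, hgbdd, fun f₀ hf₀ => ?_, fun Z hZ => hgD.2.2 Z hZ⟩
  -- g dominates every element of G
  have hmfg : (fun ω => max (f₀ ω) (g ω)) ∈ D := hDmax _ (hGD hf₀) _ hgD
  have hle : ∫ ω, max (f₀ ω) (g ω) ∂μ ≤ c := le_csSup hTbdd ⟨_, hmfg, rfl⟩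
  have hdiff : Integrable (fun ω => max (f₀ ω) (g ω) - g ω) μ :=
    (hDint _ hmfg).sub (hDint _ hgD)
  have hnonneg : 0 ≤ fun ω => max (f₀ ω) (g ω) - g ω := by
    intro ω; simp only [Pi.zero_apply, sub_nonneg]; exact le_max_right _ _
  have hint0 : ∫ ω, (max (f₀ ω) (g ω) - g ω) ∂μ = 0 := by
    have heq : ∫ ω, (max (f₀ ω) (g ω) - g ω) ∂μ
        = (∫ ω, max (f₀ ω) (g ω) ∂μ) - ∫ ω, g ω ∂μ :=
      integral_sub (hDint _ hmfg) (hDint _ hgD)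
    have hle0 : ∫ ω, (max (f₀ ω) (g ω) - g ω) ∂μ ≤ 0 := by
      rw [heq, hgint]; linarith
    exact le_antisymm hle0 (integral_nonneg hnonneg)
  have := (integral_eq_zero_iff_of_nonneg hnonneg hdiff).1 hint0
  filter_upwards [this] with ω hω
  have : max (f₀ ω) (g ω) = g ω := by
    have := sub_eq_zero.1 hω
    linarith [this]
  exact le_of_max_le_left this.le

end EssSup

end Aux

/-- The family of product measures built from the marginal families `𝒬 i`. -/
def productFamily {ι : Type*} [Fintype ι] {Ω : ι → Type*}
    [mΩ : ∀ i, MeasurableSpace (Ω i)]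
    (𝒬 : ∀ i, Set (Measure (Ω i))) : Set (Measure (∀ i, Ω i)) :=
  {Q | ∃ q : ∀ i, Measure (Ω i), ∃ hq : ∀ i, IsProbabilityMeasure (q i),
    (∀ i, q i ∈ 𝒬 i) ∧
    Q = by haveI := hq; exact Measure.pi q}

/-- **Proposition 3.1 (ii) (sub-consistency).**  For the partially consistent
orthant nonlinear expectation `𝔈_S(X) = esssup_{Q ∈ 𝒬} E^Q(X | ℱ(S))` with
`𝒬` a family of product measures and orthant σ-algebras
`ℱ(S) ≤ ℱ(S')` (for orthant stopping times `S ≤ S'`),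
`𝔈_S(X) ≤ 𝔈_S(𝔈_{S'}(X))` a.s.; in particular, if `𝔈_{S'}(X) ≤ 0` a.s. then
`𝔈_S(1_A X) ≤ 0` a.s. for every `A ∈ ℱ(S')`. -/
theorem stmt14 {ι : Type*} [Fintype ι] {Ω : ι → Type*}
    (mS mS' : ∀ i, MeasurableSpace (Ω i))
    [mΩ : ∀ i, MeasurableSpace (Ω i)]
    (hSS' : ∀ i, mS i ≤ mS' i) (hS' : ∀ i, mS' i ≤ mΩ i)
    (P : ∀ i, Measure (Ω i)) [∀ i, IsProbabilityMeasure (P i)]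
    (𝒬 : ∀ i, Set (Measure (Ω i))) (h𝒬ne : ∀ i, (𝒬 i).Nonempty)
    (h𝒬 : ∀ i, ∀ q ∈ 𝒬 i, IsProbabilityMeasure q ∧ q ≪ P i ∧ P i ≪ q)
    -- the orthant nonlinear expectations `𝔈_S` and `𝔈_{S'}`
    (ES ES' : ((∀ i, Ω i) → ℝ) → (∀ i, Ω i) → ℝ)
    (hESUB : ∀ Y : (∀ i, Ω i) → ℝ, ∀ Q ∈ productFamily 𝒬,
      Q[Y | ⨆ i, (mS i).comap (fun ω => ω i)] ≤ᵐ[Measure.pi P] ES Y)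
    (hESLeast : ∀ (Y Z : (∀ i, Ω i) → ℝ),
      (∀ Q ∈ productFamily 𝒬,
        Q[Y | ⨆ i, (mS i).comap (fun ω => ω i)] ≤ᵐ[Measure.pi P] Z) →
      ES Y ≤ᵐ[Measure.pi P] Z)
    (hES'UB : ∀ Y : (∀ i, Ω i) → ℝ, ∀ Q ∈ productFamily 𝒬,
      Q[Y | ⨆ i, (mS' i).comap (fun ω => ω i)] ≤ᵐ[Measure.pi P] ES' Y)
    (hES'Least : ∀ (Y Z : (∀ i, Ω i) → ℝ),
      (∀ Q ∈ productFamily 𝒬,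
        Q[Y | ⨆ i, (mS' i).comap (fun ω => ω i)] ≤ᵐ[Measure.pi P] Z) →
      ES' Y ≤ᵐ[Measure.pi P] Z)
    (X : (∀ i, Ω i) → ℝ) (hXmeas : Measurable X)
    (hXbdd : ∃ K, ∀ ω, |X ω| ≤ K) :
    ES X ≤ᵐ[Measure.pi P] ES (ES' X) ∧
    (ES' X ≤ᵐ[Measure.pi P] 0 →
      ∀ A : Set (∀ i, Ω i),
        MeasurableSet[⨆ i, (mS' i).comap (fun ω => ω i)] A →
        ES (A.indicator X) ≤ᵐ[Measure.pi P] 0) := by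
  classical
  rcases isEmpty_or_nonempty (∀ i, Ω i) with hemp | hnonemp
  · exact ⟨Filter.Eventually.of_forall fun ω => isEmptyElim ω,
      fun _ A _ => Filter.Eventually.of_forall fun ω => isEmptyElim ω⟩
  obtain ⟨K, hK⟩ := hXbdd
  obtain ⟨ω0⟩ := hnonemp
  have hK0 : (0:ℝ) ≤ K := le_trans (abs_nonneg _) (hK ω0)
  set m : MeasurableSpace (∀ i, Ω i) := ⨆ i, (mS i).comap (fun ω => ω i) with hm
  set m' : MeasurableSpace (∀ i, Ω i) := ⨆ i, (mS' i).comap (fun ω => ω i) with hm'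
  have hmm' : m ≤ m' := iSup_mono fun i => MeasurableSpace.comap_mono (hSS' i)
  have hm'le : m' ≤ MeasurableSpace.pi :=
    iSup_le fun i => le_trans (MeasurableSpace.comap_mono (hS' i))
      (measurable_pi_apply i).comap_le
  -- facts about the measures in the product family
  have hQfacts : ∀ Q ∈ productFamily 𝒬,
      IsProbabilityMeasure Q ∧ Q ≪ Measure.pi P ∧ Measure.pi P ≪ Q := by
    rintro Q ⟨q, hq, hqmem, rfl⟩
    haveI : ∀ i, IsProbabilityMeasure (q i) := hq
    refine ⟨inferInstance, ?_, ?_⟩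
    · exact pi_absolutelyContinuous_aux _ _ _ q P hq (fun i => inferInstance)
        (fun i => (h𝒬 i (q i) (hqmem i)).2.1)
    · exact pi_absolutelyContinuous_aux _ _ _ P q (fun i => inferInstance) hq
        (fun i => (h𝒬 i (q i) (hqmem i)).2.2)
  have hXint : ∀ (ν : @Measure (∀ i, Ω i) MeasurableSpace.pi), IsProbabilityMeasure ν → Integrable X ν := by
    intro ν hν
    haveI := hν
    exact (integrable_const K).mono' hXmeas.aestronglyMeasurable
      (Filter.Eventually.of_forall fun ω => by simpa [Real.norm_eq_abs] using hK ω)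
  -- the clamp function
  set cl : ℝ → ℝ := fun t => max (-K) (min K t) with hcl
  have hclbd : ∀ t, |cl t| ≤ K := fun t =>
    abs_le.2 ⟨le_max_left _ _, max_le (by linarith) (min_le_left _ _)⟩
  have hcleq : ∀ t, |t| ≤ K → cl t = t := by
    intro t ht
    rw [abs_le] at ht
    simp only [hcl]
    rw [min_eq_right ht.2, max_eq_right ht.1]
  -- the condexps are a.e. bounded by K
  have hcond_bd : ∀ (Q : @Measure (∀ i, Ω i) MeasurableSpace.pi), IsProbabilityMeasure Q →
      ∀ᵐ ω ∂Q, |(Q[X|m']) ω| ≤ K := by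
    intro Q hQ
    haveI := hQ
    have := ae_bdd_condExp_of_ae_bdd (μ := Q) (m := m') (R := ⟨K, hK0⟩)
      (Filter.Eventually.of_forall fun ω => hK ω)
    exact this
  have hclcond : ∀ Q ∈ productFamily 𝒬,
      (fun ω => cl ((Q[X|m']) ω)) =ᵐ[Measure.pi P] Q[X|m'] := by
    intro Q hQ
    obtain ⟨hQp, hQac, hPac⟩ := hQfacts Q hQ
    have h1 : (fun ω => cl ((Q[X|m']) ω)) =ᵐ[Q] Q[X|m'] := by
      filter_upwards [hcond_bd Q hQp] with ω hω
      exact hcleq _ hω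
    exact h1.filter_mono hPac.ae_le
  -- the family of clamped conditional expectations
  set G : Set ((∀ i, Ω i) → ℝ) :=
    {f | ∃ Q ∈ productFamily 𝒬, f = fun ω => cl ((Q[X|m']) ω)} with hG
  -- nonemptiness of the product family
  choose q0 hq0 using h𝒬ne
  have hq0p : ∀ i, IsProbabilityMeasure (q0 i) := fun i => (h𝒬 i (q0 i) (hq0 i)).1
  have hQ0 : Measure.pi q0 ∈ productFamily 𝒬 := ⟨q0, hq0p, hq0, rfl⟩
  have hGne : G.Nonempty := ⟨_, ⟨Measure.pi q0, hQ0, rfl⟩⟩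
  have hGprop : ∀ f ∈ G, Measurable[MeasurableSpace.pi] f ∧ ∀ ω, |f ω| ≤ K := by
    rintro f ⟨Q, hQ, rfl⟩
    have hcm : Measurable[MeasurableSpace.pi] (Q[X|m']) :=
      (stronglyMeasurable_condExp.mono hm'le).measurable
    exact ⟨measurable_const.max (measurable_const.min hcm), fun ω => hclbd _⟩
  obtain ⟨g, hgmeas, hgbd, hgub, hgleast⟩ :=
    @exists_ae_essSup _ MeasurableSpace.pi (Measure.pi P) inferInstance G hGne K hGprop
  -- every conditional expectation is a.e. below g
  have hcondle : ∀ Q ∈ productFamily 𝒬, Q[X|m'] ≤ᵐ[Measure.pi P] g := by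
    intro Q hQ
    have h1 : (fun ω => cl ((Q[X|m']) ω)) ≤ᵐ[Measure.pi P] g :=
      hgub _ ⟨Q, hQ, rfl⟩
    exact ((hclcond Q hQ).symm.le).trans h1
  -- `ES' X` coincides a.e. with `g`
  have hgES' : ES' X =ᵐ[Measure.pi P] g := by
    have le1 : ES' X ≤ᵐ[Measure.pi P] g := hES'Least X g hcondle
    have le2 : g ≤ᵐ[Measure.pi P] ES' X := by
      refine hgleast (ES' X) ?_
      rintro f ⟨Q, hQ, rfl⟩
      exact (hclcond Q hQ).le.trans (hES'UB X Q hQ)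
    exact le1.antisymm le2
  constructor
  · -- sub-consistency
    refine hESLeast X (ES (ES' X)) ?_
    intro Q hQ
    obtain ⟨hQp, hQac, hPac⟩ := hQfacts Q hQ
    haveI := hQp
    have tower : Q[X|m] =ᵐ[Q] Q[Q[X|m'] | m] :=
      (condExp_condExp_of_le hmm' hm'le).symm
    have hgintQ : Integrable g Q :=
      (integrable_const K).mono' hgmeas.aestronglyMeasurable
        (Filter.Eventually.of_forall fun ω => by simpa [Real.norm_eq_abs] using hgbd ω)
    have mono1 : Q[Q[X|m'] | m] ≤ᵐ[Q] Q[g|m] :=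
      condExp_mono integrable_condExp hgintQ
        ((hcondle Q hQ).filter_mono hQac.ae_le)
    have eq2 : Q[g|m] =ᵐ[Q] Q[ES' X|m] :=
      condExp_congr_ae (hgES'.symm.filter_mono hQac.ae_le)
    have le3 : Q[ES' X|m] ≤ᵐ[Q] ES (ES' X) :=
      (hESUB (ES' X) Q hQ).filter_mono hQac.ae_le
    have : Q[X|m] ≤ᵐ[Q] ES (ES' X) :=
      tower.trans_le (mono1.trans (eq2.le.trans le3))
    exact this.filter_mono hPac.ae_le
  · -- the indicator consequence
    intro h0 A hA
    refine hESLeast (A.indicator X) 0 ?_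
    intro Q hQ
    obtain ⟨hQp, hQac, hPac⟩ := hQfacts Q hQ
    haveI := hQp
    have hXintQ : Integrable X Q := hXint Q hQp
    have tower : Q[A.indicator X|m] =ᵐ[Q] Q[Q[A.indicator X|m'] | m] :=
      (condExp_condExp_of_le hmm' hm'le).symm
    have hind : Q[A.indicator X|m'] =ᵐ[Q] A.indicator (Q[X|m']) :=
      condExp_indicator hXintQ hA
    have hce0 : Q[X|m'] ≤ᵐ[Q] (0 : (∀ i, Ω i) → ℝ) :=
      (((hES'UB X Q hQ).trans h0).filter_mono hQac.ae_le)
    have hind0 : A.indicator (Q[X|m']) ≤ᵐ[Q] (0 : (∀ i, Ω i) → ℝ) := by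
      filter_upwards [hce0] with ω hω
      simp only [Pi.zero_apply] at hω ⊢
      rw [Set.indicator_apply]
      split_ifs with h
      · exact hω
      · exact le_rfl
    have hcond0 : Q[A.indicator X|m'] ≤ᵐ[Q] (0 : (∀ i, Ω i) → ℝ) :=
      hind.trans_le hind0
    have final : Q[A.indicator X|m] ≤ᵐ[Q] (0 : (∀ i, Ω i) → ℝ) :=
      tower.trans_le (condExp_nonpos hcond0)
    exact final.filter_mono hPac.ae_le
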